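/- For every N ≥ 0, the graph Γ_{k,N+1} of the action of the lamplighter group L_k on the (N+1)-st level of the k-regular rooted tree (with respect to the generators c̄_r = cʳb, 0 ≤ r ≤ k−1) is isomorphic, as an oriented graph forgetting labels, to the line graph of Γ_{k,N}. -/

import Mathlib

/-- An oriented (multi)graph: vertices, edges, initial and terminal maps. -/
structure OGraph where
  V : Type
  E : Type
  ι : E → V
  τ : E → V

namespace OGraph

/-- Isomorphism of oriented graphs. -/
structure Iso (G H : OGraph) where
  fV : G.V ≃ H.V
  fE : G.E ≃ H.E
  hι : ∀ e, H.ι (fE e) = fV (G.ι e)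
  hτ : ∀ e, H.τ (fE e) = fV (G.τ e)

/-- The line graph of an oriented graph. -/
def line (G : OGraph) : OGraph where
  V := G.E
  E := {p : G.E × G.E // G.τ p.1 = G.ι p.2}
  ι p := p.1.1
  τ p := p.1.2

end OGraph

/-- The de Bruijn graph `B_{k,N}`: vertices are words `x₁…x_N` over `{0,…,k−1}`
(realized as `ZMod k`), and for each symbol `y` there is one edge from `x₁…x_N`
to `x₂…x_N y`. -/
def deBruijn (k N : ℕ) : OGraph where
  V := Fin N → ZMod k
  E := (Fin N → ZMod k) × ZMod k
  ι e := e.1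
  τ e := fun j => if h : (j : ℕ) + 1 < N then e.1 ⟨(j : ℕ) + 1, h⟩ else e.2

/-- The graph `Γ_{k,N}` of the action of the lamplighter group `L_k = ℤ/kℤ ≀ ℤ` on the
`N`-th level of the `k`-regular rooted tree, with respect to the generators
`c̄_r = cʳb` (`0 ≤ r ≤ k−1`, realized as `r : ZMod k`): for each vertex `x = x₁…x_N`
and each `r` there is one edge from `x` to
`c̄_r · x = (x₁+r)(x₂+x₁)…(x_N+x_{N−1})` (mod `k`). -/
def gammaGraph (k N : ℕ) : OGraph where
  V := Fin N → ZMod k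
  E := (Fin N → ZMod k) × ZMod k
  ι e := e.1
  τ e := fun j => if (j : ℕ) = 0 then e.1 j + e.2
    else e.1 j + e.1 ⟨(j : ℕ) - 1, Nat.lt_of_le_of_lt (Nat.sub_le _ _) j.2⟩

/-- Key computation: taking the "tail + head-as-label" edge commutes with the dynamics. -/
private lemma gamma_tau_succ (k N : ℕ) (x : Fin (N + 1) → ZMod k) (r : ZMod k) :
    (gammaGraph k N).τ (x ∘ Fin.succ, x 0)
      = ((gammaGraph k (N + 1)).τ (x, r)) ∘ Fin.succ := by
  funext j
  rcases j with ⟨jv, hj⟩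
  cases jv with
  | zero =>
      simp [gammaGraph, Fin.succ, Function.comp]
  | succ m =>
      simp only [gammaGraph, Function.comp, Fin.succ]
      have h1 : ((⟨m + 1, hj⟩ : Fin N) : ℕ) = m + 1 := rfl
      simp [h1, Fin.ext_iff]

private lemma gamma_tau_zero (k N : ℕ) (x : Fin (N + 1) → ZMod k) (r : ZMod k) :
    ((gammaGraph k (N + 1)).τ (x, r)) 0 = x 0 + r := by
  simp [gammaGraph]

/-- For every `N ≥ 0`, the action graph `Γ_{k,N+1}` is isomorphic,
as an oriented graph (forgetting labels), to the line graph of `Γ_{k,N}`. -/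
theorem gammaGraph_succ_iso_line (k N : ℕ) (hk : 2 ≤ k) :
    Nonempty (OGraph.Iso (gammaGraph k (N + 1)) (gammaGraph k N).line) := by
  refine ⟨?_⟩
  refine
    { fV :=
        { toFun := fun x => (x ∘ Fin.succ, x 0)
          invFun := fun p => Fin.cons p.2 p.1
          left_inv := fun x => by
            funext j
            cases j using Fin.cases <;> simp <;> exact rfl
          right_inv := fun p => by
            rcases p with ⟨v, s⟩
            refine Prod.ext ?_ ?_
            · funext j; simp
            · simp }
      fE :=
        { toFun := fun e =>
            ⟨(((e.1 : Fin (N + 1) → ZMod k) ∘ Fin.succ, e.1 0),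
              (((gammaGraph k (N + 1)).τ e) ∘ Fin.succ,
                ((gammaGraph k (N + 1)).τ e) 0)),
              by rcases e with ⟨x, r⟩; exact gamma_tau_succ k N x r⟩
          invFun := fun q => (Fin.cons q.1.1.2 q.1.1.1, q.1.2.2 - q.1.1.2)
          left_inv := fun e => by
            rcases e with ⟨x, r⟩
            refine Prod.ext ?_ ?_
            · funext j
              cases j using Fin.cases <;> simp
            · simp [gamma_tau_zero]
          right_inv := fun q => by
            rcases q with ⟨⟨⟨v, s⟩, ⟨w, t⟩⟩, h⟩
            have h' : (gammaGraph k N).τ (v, s) = w := h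
            refine Subtype.ext ?_
            have hx : (Fin.cons s v : Fin (N + 1) → ZMod k) ∘ Fin.succ = v := by
              funext j; simp
            have hx0 : (Fin.cons s v : Fin (N + 1) → ZMod k) 0 = s := by simp
            refine Prod.ext ?_ ?_
            · simp [hx, hx0]; exact rfl
            · have key := gamma_tau_succ k N (Fin.cons s v) (t - s)
              rw [hx, hx0, h'] at key
              refine Prod.ext ?_ ?_
              · exact key.symm
              · simp [gamma_tau_zero, hx0] }
      hι := fun e => rfl
      hτ := fun e => rfl }
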